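/- arXiv:1012.2751 — 2 statements merged into one kernel-verified Lean document; each statement's English description precedes it below -/
import Mathlib

section
/- Let blocks of a random sequence be generated as follows: at block i (of k symbols over alphabet X), a prefix of k-d symbols is drawn uniformly and independently of the past; if this prefix equals a previously drawn prefix, the suffix is copied from that earlier block, otherwise the suffix of d symbols is drawn uniformly. Then the conditional entropy of the i-th block given all previous blocks satisfies H(Z_i | Z^{i-1}) ≥ d·log|X|·(1 - (i-1)/|X|^{k-d}) + (k-d)·log|X|. -/
open Finset

/-- Shannon entropy (base 2) of a probability mass function on a finite type. -/
noncomputable def ent {α : Type*} [Fintype α] (p : α → ℝ) : ℝ :=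
  -∑ a, p a * Real.logb 2 (p a)

/-- Distribution of a random variable `f` on the uniform finite probability space `Ω`. -/
noncomputable def dist {Ω α : Type*} [Fintype Ω] [Fintype α] [DecidableEq α]
    (f : Ω → α) : α → ℝ :=
  fun a => ((Finset.univ.filter fun ω => f ω = a).card : ℝ) / (Fintype.card Ω : ℝ)

/-- Entropy of a random variable on the uniform finite probability space. -/
noncomputable def entRV {Ω α : Type*} [Fintype Ω] [Fintype α] [DecidableEq α]
    (f : Ω → α) : ℝ :=
  ent (dist f)

/-- Conditional entropy H(f | g) = H(f, g) - H(g), on the uniform finite space `Ω`. -/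
noncomputable def condEnt {Ω α β : Type*} [Fintype Ω] [Fintype α] [Fintype β]
    [DecidableEq α] [DecidableEq β] (f : Ω → α) (g : Ω → β) : ℝ :=
  entRV (fun ω => (f ω, g ω)) - entRV g

section Generic
variable {Ω α β : Type*} [Fintype Ω] [Fintype α] [Fintype β] [DecidableEq α] [DecidableEq β]

def fibCard (f : Ω → α) (ω : Ω) : ℕ := (univ.filter fun ω' => f ω' = f ω).card

lemma fibCard_pos (f : Ω → α) (ω : Ω) : 0 < fibCard f ω :=
  Finset.card_pos.2 ⟨ω, by simp [fibCard]⟩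

lemma entRV_eq (f : Ω → α) :
    entRV f = Real.logb 2 (Fintype.card Ω)
      - (Fintype.card Ω : ℝ)⁻¹ * ∑ ω, Real.logb 2 (fibCard f ω) := by
  classical
  rcases isEmpty_or_nonempty Ω with hΩ | hΩ
  · simp [entRV, ent, _root_.dist, Fintype.card_eq_zero, Real.logb_zero]
  have hn : (0:ℝ) < (Fintype.card Ω : ℝ) := by
    exact_mod_cast Fintype.card_pos
  set n : ℝ := (Fintype.card Ω : ℝ) with hns
  set c : α → ℕ := fun a => (univ.filter fun ω => f ω = a).card with hc
  have hsum : ∑ a, (c a : ℝ) = n := by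
    rw [hns]
    have := Finset.card_eq_sum_card_fiberwise (f := f) (s := (univ : Finset Ω))
      (t := (univ : Finset α)) (fun x _ => mem_univ _)
    rw [← Finset.card_univ, this]
    push_cast
    rfl
  have key2 : ∑ ω, Real.logb 2 (fibCard f ω) = ∑ a, (c a : ℝ) * Real.logb 2 (c a) := by
    rw [← Finset.sum_fiberwise univ f (fun ω => Real.logb 2 (fibCard f ω))]
    refine Finset.sum_congr rfl fun b _ => ?_
    have : ∀ ω ∈ univ.filter fun ω => f ω = b,
        Real.logb 2 (fibCard f ω) = Real.logb 2 (c b) := by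
      intro ω hω
      have : f ω = b := (Finset.mem_filter.1 hω).2
      simp only [fibCard, this, hc]
    rw [Finset.sum_congr rfl this, Finset.sum_const, nsmul_eq_mul]
  have expand : ∀ a, (c a / n) * Real.logb 2 (c a / n)
      = (c a / n) * Real.logb 2 (c a) - (c a / n) * Real.logb 2 n := by
    intro a
    rcases Nat.eq_zero_or_pos (c a) with h | h
    · simp [h]
    · rw [Real.logb_div (by exact_mod_cast h.ne') hn.ne', mul_sub]
  have : entRV f = -∑ a, (c a / n) * Real.logb 2 (c a / n) := rfl
  rw [this, Finset.sum_congr rfl fun a _ => expand a, Finset.sum_sub_distrib]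
  have hB : ∑ a, ((c a : ℝ) / n) * Real.logb 2 n = Real.logb 2 n := by
    rw [← Finset.sum_mul, ← Finset.sum_div, hsum, div_self hn.ne', one_mul]
  have hA : ∑ a, ((c a : ℝ) / n) * Real.logb 2 (c a)
      = n⁻¹ * ∑ ω, Real.logb 2 (fibCard f ω) := by
    rw [key2, Finset.mul_sum]
    refine Finset.sum_congr rfl fun a _ => by ring
  rw [hA, hB]
  ring

lemma condEnt_eq (f : Ω → α) (g : Ω → β) :
    condEnt f g = (Fintype.card Ω : ℝ)⁻¹ *
      ∑ ω, (Real.logb 2 (fibCard g ω)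
        - Real.logb 2 (fibCard (fun ω => (f ω, g ω)) ω)) := by
  rw [condEnt, entRV_eq, entRV_eq, Finset.sum_sub_distrib]
  ring

end Generic


section Counting

lemma card_filter_cylinder {ι γ : Type*} [Fintype ι] [DecidableEq ι] [Fintype γ]
    [DecidableEq γ] (A : Finset ι) (S : ι → γ) :
    (univ.filter fun v : ι → γ => ∀ m ∈ A, v m = S m).card
      = Fintype.card γ ^ (Fintype.card ι - A.card) := by
  rw [← Fintype.card_subtype]
  have e : {v : ι → γ // ∀ m ∈ A, v m = S m} ≃ ({x // x ∈ Aᶜ} → γ) :=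
    { toFun := fun v x => v.1 x.1
      invFun := fun u => ⟨fun j => if h : j ∈ A then S j else u ⟨j, by simp [h]⟩,
        fun m hm => by simp [hm]⟩
      left_inv := fun v => Subtype.ext (funext fun j => by
        by_cases h : j ∈ A
        · simp [h, v.2 j h]
        · simp [h])
      right_inv := fun u => funext fun x => by
        have hx : x.1 ∉ A := Finset.mem_compl.1 x.2
        simp [hx] }
  rw [Fintype.card_congr e, Fintype.card_fun]
  congr 1
  simp [Finset.card_compl]

lemma card_filter_prod {α β : Type*} [Fintype α] [Fintype β] (p : α → Prop) (q : β → Prop)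
    [DecidablePred p] [DecidablePred q] :
    ((univ : Finset (α × β)).filter fun x => p x.1 ∧ q x.2).card
      = (univ.filter p).card * (univ.filter q).card := by
  rw [← Finset.univ_product_univ, Finset.filter_product, Finset.card_product]

lemma card_filter_fst {α β : Type*} [Fintype α] [Fintype β] (p : α → Prop)
    [DecidablePred p] :
    ((univ : Finset (α × β)).filter fun x => p x.1).card
      = (univ.filter p).card * Fintype.card β := by
  have h2 := card_filter_prod (β := β) p (fun _ => True)
  simpa using h2

lemma card_filter_eq_pair {ι γ : Type*} [Fintype ι] [DecidableEq ι] [Fintype γ]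
    [DecidableEq γ] (j j' : ι) (hjj : j ≠ j') :
    (univ.filter fun v : ι → γ => v j = v j').card
      = Fintype.card γ ^ (Fintype.card ι - 1) := by
  rw [Finset.card_eq_sum_card_fiberwise
    (f := fun v : ι → γ => v j') (t := univ) (fun x _ => mem_univ _)]
  have hterm : ∀ a : γ, ((univ.filter fun v : ι → γ => v j = v j').filter
      fun v => v j' = a).card = Fintype.card γ ^ (Fintype.card ι - 2) := by
    intro a
    rw [Finset.filter_filter]
    have : (univ.filter fun v : ι → γ => v j = v j' ∧ v j' = a)
        = univ.filter fun v : ι → γ => ∀ m ∈ ({j, j'} : Finset ι), v m = a := by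
      apply Finset.filter_congr
      intro v _
      simp only [Finset.mem_insert, Finset.mem_singleton]
      constructor
      · rintro ⟨h1, h2⟩ m hm
        rcases hm with h | h <;> subst h
        · rw [h1, h2]
        · exact h2
      · intro h
        have h1 := h j (Or.inl rfl)
        have h2 := h j' (Or.inr rfl)
        exact ⟨h1.trans h2.symm, h2⟩
    rw [this, card_filter_cylinder]
    congr 1
    rw [Finset.card_insert_of_notMem (by simpa using hjj), Finset.card_singleton]
  rw [Finset.sum_congr rfl fun a _ => hterm a, Finset.sum_const, Finset.card_univ,
    smul_eq_mul]
  rcases Nat.lt_or_ge (Fintype.card ι) 2 with h | h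
  · -- card ι ≤ 1 : then j = j' impossible unless... card ι could be 0 or 1; j≠j' forces card ≥ 2
    exfalso
    have : 1 < Fintype.card ι := Fintype.one_lt_card_iff.2 ⟨j, j', hjj⟩
    omega
  · rw [← pow_succ']
    congr 1
    omega

end Counting


/-- Sample space of the block-generation process: independent uniform prefixes of
length k-d and independent uniform "fresh" suffixes of length d, one per block. -/
abbrev BlockSpace (X : Type*) (k d i : ℕ) :=
  (Fin i → (Fin (k - d) → X)) × (Fin i → (Fin d → X))

/-- The j-th generated block: its prefix is the drawn prefix, and its suffix is the fresh
suffix of the earliest block having the same prefix (so a repeated prefix copies the suffix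
of the earlier block, and a new prefix gets a fresh uniform suffix). -/
def blockFn {X : Type*} [DecidableEq X] (k d i : ℕ)
    (ω : BlockSpace X k d i) (j : Fin i) : Fin k → X :=
  fun t =>
    if h : t.val < k - d then ω.1 j ⟨t.val, h⟩
    else ω.2 ((Finset.univ.filter fun j' : Fin i => ω.1 j' = ω.1 j).min'
        ⟨j, by simp⟩) ⟨t.val - (k - d), by omega⟩

set_option linter.unusedSectionVars false
section Blocks
variable {X : Type*} [Fintype X] [DecidableEq X] (k d i : ℕ)

def cls (ω : BlockSpace X k d i) (j : Fin i) : Finset (Fin i) :=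
  univ.filter fun j' => ω.1 j' = ω.1 j

lemma mem_cls_self (ω : BlockSpace X k d i) (j : Fin i) : j ∈ cls k d i ω j := by
  simp [cls]

def minc (ω : BlockSpace X k d i) (j : Fin i) : Fin i :=
  (cls k d i ω j).min' ⟨j, mem_cls_self k d i ω j⟩

lemma blockFn_eq (ω : BlockSpace X k d i) (j : Fin i) (t : Fin k) :
    blockFn k d i ω j t = if h : t.val < k - d then ω.1 j ⟨t.val, h⟩
      else ω.2 (minc k d i ω j) ⟨t.val - (k - d), by omega⟩ := rfl

lemma minc_le_val (ω : BlockSpace X k d i) (j : Fin i) : (minc k d i ω j).val ≤ j.val :=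
  Finset.min'_le _ _ (mem_cls_self k d i ω j)

lemma prefix_minc (ω : BlockSpace X k d i) (j : Fin i) :
    ω.1 (minc k d i ω j) = ω.1 j := by
  have := Finset.min'_mem (cls k d i ω j) ⟨j, mem_cls_self k d i ω j⟩
  exact (Finset.mem_filter.1 this).2

lemma minc_eq_of_agree (ω ω' : BlockSpace X k d i) (n : ℕ)
    (hag : ∀ m : Fin i, m.val < n → ω'.1 m = ω.1 m) (j : Fin i) (hj : j.val < n) :
    minc k d i ω' j = minc k d i ω j := by
  apply le_antisymm
  · apply Finset.min'_le
    have h1 : (minc k d i ω j).val < n := lt_of_le_of_lt (minc_le_val k d i ω j) hj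
    rw [cls, Finset.mem_filter]
    refine ⟨mem_univ _, ?_⟩
    rw [hag _ h1, hag _ hj, prefix_minc]
  · apply Finset.min'_le
    have h1 : (minc k d i ω' j).val < n := lt_of_le_of_lt (minc_le_val k d i ω' j) hj
    rw [cls, Finset.mem_filter]
    refine ⟨mem_univ _, ?_⟩
    rw [← hag _ h1, ← hag _ hj, prefix_minc]

lemma block_prefix (ω : BlockSpace X k d i) (j : Fin i) (t : Fin (k - d)) :
    blockFn k d i ω j ⟨t.val, lt_of_lt_of_le t.2 (Nat.sub_le k d)⟩ = ω.1 j t := by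
  rw [blockFn_eq, dif_pos t.2]

lemma block_suffix (hd : 1 ≤ d) (hdk : d ≤ k) (ω : BlockSpace X k d i) (j : Fin i)
    (t' : Fin d) :
    blockFn k d i ω j ⟨k - d + t'.val,
      Nat.lt_of_lt_of_le (Nat.add_lt_add_left t'.2 (k - d)) (by omega)⟩
      = ω.2 (minc k d i ω j) t' := by
  rw [blockFn_eq, dif_neg (show ¬(k - d + t'.val < k - d) by omega)]
  have harg : (⟨k - d + t'.val - (k - d), by omega⟩ : Fin d) = t' := by
    apply Fin.ext
    show k - d + t'.val - (k - d) = t'.val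
    omega
  exact congrArg _ harg

def prevF (n : ℕ) : Finset (Fin i) := univ.filter fun j => j.val < n

lemma prevF_card (n : ℕ) (hn : n ≤ i) : (prevF i n).card = n := by
  apply Finset.card_eq_of_bijective (fun m hm => ⟨m, lt_of_lt_of_le hm hn⟩)
  · intro a ha
    have : a.val < n := by simpa [prevF] using ha
    exact ⟨a.val, this, Fin.ext rfl⟩
  · intro m hm
    simp [prevF, hm]
  · intro a b ha hb hab
    exact Fin.val_eq_of_eq hab

def Mins (n : ℕ) (ω : BlockSpace X k d i) : Finset (Fin i) :=
  (prevF i n).image (minc k d i ω)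

lemma blocks_agree_iff (hd : 1 ≤ d) (hdk : d ≤ k) (n : ℕ)
    (ω ω' : BlockSpace X k d i) :
    (∀ j : Fin i, j.val < n → blockFn k d i ω' j = blockFn k d i ω j)
    ↔ (∀ m ∈ prevF i n, ω'.1 m = ω.1 m) ∧ (∀ m ∈ Mins k d i n ω, ω'.2 m = ω.2 m) := by
  constructor
  · intro hb
    have hp : ∀ m : Fin i, m.val < n → ω'.1 m = ω.1 m := by
      intro m hm
      funext t
      have := congrFun (hb m hm) ⟨t.val, lt_of_lt_of_le t.2 (Nat.sub_le k d)⟩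
      rwa [block_prefix, block_prefix] at this
    constructor
    · intro m hm
      exact hp m (by simpa [prevF] using hm)
    · intro m hm
      rw [Mins, Finset.mem_image] at hm
      obtain ⟨j, hj, rfl⟩ := hm
      have hjn : j.val < n := by simpa [prevF] using hj
      funext t'
      have h1 := congrFun (hb j hjn) ⟨k - d + t'.val,
        Nat.lt_of_lt_of_le (Nat.add_lt_add_left t'.2 (k - d)) (by omega)⟩
      rw [block_suffix k d i hd hdk, block_suffix k d i hd hdk,
        minc_eq_of_agree k d i ω ω' n hp j hjn] at h1
      exact h1
  · rintro ⟨hp, hs⟩ j hj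
    have hp' : ∀ m : Fin i, m.val < n → ω'.1 m = ω.1 m := by
      intro m hm
      exact hp m (by simp [prevF, hm])
    funext t
    rw [blockFn_eq, blockFn_eq]
    by_cases h : t.val < k - d
    · rw [dif_pos h, dif_pos h, hp' j hj]
    · rw [dif_neg h, dif_neg h, minc_eq_of_agree k d i ω ω' n hp' j hj,
        hs (minc k d i ω j) (Finset.mem_image.2 ⟨j, by simp [prevF, hj], rfl⟩)]

end Blocks


set_option linter.unusedVariables false
section Main
variable {X : Type*} [Fintype X] [DecidableEq X] (k d i : ℕ)

lemma card_blockfiber (hd : 1 ≤ d) (hdk : d ≤ k) (n : ℕ) (ω : BlockSpace X k d i) :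
    (univ.filter fun ω' : BlockSpace X k d i =>
        ∀ j : Fin i, j.val < n → blockFn k d i ω' j = blockFn k d i ω j).card
      = Fintype.card (Fin (k - d) → X) ^ (i - (prevF i n).card)
        * Fintype.card (Fin d → X) ^ (i - (Mins k d i n ω).card) := by
  have hcongr : (univ.filter fun ω' : BlockSpace X k d i =>
      ∀ j : Fin i, j.val < n → blockFn k d i ω' j = blockFn k d i ω j)
      = univ.filter fun ω' : BlockSpace X k d i =>
        (∀ m ∈ prevF i n, ω'.1 m = ω.1 m) ∧ (∀ m ∈ Mins k d i n ω, ω'.2 m = ω.2 m) := by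
    apply Finset.filter_congr
    intro ω' _
    exact blocks_agree_iff k d i hd hdk n ω ω'
  rw [hcongr,
    card_filter_prod (fun u : Fin i → (Fin (k - d) → X) => ∀ m ∈ prevF i n, u m = ω.1 m)
      (fun v : Fin i → (Fin d → X) => ∀ m ∈ Mins k d i n ω, v m = ω.2 m)]
  congr 1
  · have h1 := card_filter_cylinder (prevF i n) (ω.1)
    rw [Fintype.card_fin] at h1
    convert h1 using 2
    congr!
  · have h2 := card_filter_cylinder (Mins k d i n ω) (ω.2)
    rw [Fintype.card_fin] at h2
    convert h2 using 2
    congr!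

def lastI (hi : 1 ≤ i) : Fin i := ⟨i - 1, by omega⟩

def freshP (hi : 1 ≤ i) (ω : BlockSpace X k d i) : Prop :=
  ∀ j : Fin i, j.val < i - 1 → ω.1 j ≠ ω.1 (lastI i hi)

instance freshP_dec (hi : 1 ≤ i) : DecidablePred (freshP (X := X) k d i hi) := fun ω => by
  unfold freshP; infer_instance

lemma Mins_card_eq (hi : 1 ≤ i) (ω : BlockSpace X k d i) :
    (Mins k d i i ω).card
      = (Mins k d i (i - 1) ω).card + (if freshP k d i hi ω then 1 else 0) := by
  have huniv : prevF i i = insert (lastI i hi) (prevF i (i - 1)) := by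
    ext j
    have hj := j.isLt
    simp only [prevF, mem_filter, mem_univ, true_and, Finset.mem_insert, lastI,
      Fin.ext_iff]
    omega
  have himg : Mins k d i i ω
      = insert (minc k d i ω (lastI i hi)) (Mins k d i (i - 1) ω) := by
    rw [Mins, huniv, Finset.image_insert, Mins]
  rw [himg]
  by_cases hf : freshP k d i hi ω
  · rw [if_pos hf]
    have hlast : minc k d i ω (lastI i hi) = lastI i hi := by
      apply Fin.ext
      have h1 := minc_le_val k d i ω (lastI i hi)
      by_contra hne
      have h2 : (minc k d i ω (lastI i hi)).val < i - 1 := by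
        simp only [lastI] at h1 hne ⊢
        omega
      exact hf _ h2 (prefix_minc k d i ω (lastI i hi))
    rw [hlast, Finset.card_insert_of_notMem]
    intro hmem
    rw [Mins, Finset.mem_image] at hmem
    obtain ⟨j, hj, hmj⟩ := hmem
    have hjv : j.val < i - 1 := by simpa [prevF] using hj
    have hle := minc_le_val k d i ω j
    have : (lastI i hi).val = (minc k d i ω j).val := by rw [hmj]
    simp only [lastI] at this
    omega
  · rw [if_neg hf, add_zero]
    unfold freshP at hf
    push_neg at hf
    obtain ⟨j, hjv, hje⟩ := hf
    have hmm : minc k d i ω (lastI i hi) = minc k d i ω j := by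
      apply le_antisymm
      · apply Finset.min'_le
        rw [cls, Finset.mem_filter]
        refine ⟨mem_univ _, ?_⟩
        rw [prefix_minc]
        exact hje
      · apply Finset.min'_le
        rw [cls, Finset.mem_filter]
        refine ⟨mem_univ _, ?_⟩
        rw [prefix_minc]
        exact hje.symm
    have hm : minc k d i ω (lastI i hi) ∈ Mins k d i (i - 1) ω := by
      rw [hmm, Mins, Finset.mem_image]
      exact ⟨j, by simp [prevF, hjv], rfl⟩
    rw [Finset.insert_eq_self.2 hm]

lemma notfresh_bound (hi : 1 ≤ i) :
    (univ.filter fun ω : BlockSpace X k d i => ¬ freshP k d i hi ω).card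
      ≤ (i - 1) * (Fintype.card (Fin (k - d) → X) ^ (i - 1)
          * Fintype.card (Fin d → X) ^ i) := by
  have hsub : (univ.filter fun ω : BlockSpace X k d i => ¬ freshP k d i hi ω)
      ⊆ (prevF i (i - 1)).biUnion (fun j => univ.filter
          fun ω : BlockSpace X k d i => ω.1 j = ω.1 (lastI i hi)) := by
    intro ω hω
    simp only [mem_filter, mem_univ, true_and] at hω
    unfold freshP at hω
    push_neg at hω
    obtain ⟨j, hjv, hje⟩ := hω
    exact Finset.mem_biUnion.2 ⟨j, by simp [prevF, hjv], by simp [hje]⟩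
  refine le_trans (Finset.card_le_card hsub) (le_trans Finset.card_biUnion_le ?_)
  have hterm : ∀ j ∈ prevF i (i - 1),
      (univ.filter fun ω : BlockSpace X k d i => ω.1 j = ω.1 (lastI i hi)).card
        = Fintype.card (Fin (k - d) → X) ^ (i - 1) * Fintype.card (Fin d → X) ^ i := by
    intro j hj
    have hjv : j.val < i - 1 := by simpa [prevF] using hj
    have hne : j ≠ lastI i hi := by
      intro h
      rw [Fin.ext_iff] at h
      simp only [lastI] at h
      omega
    rw [card_filter_fst (fun u : Fin i → (Fin (k - d) → X) => u j = u (lastI i hi)),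
      card_filter_eq_pair j (lastI i hi) hne]
    simp [Fintype.card_fun, Fintype.card_fin]
  rw [Finset.sum_congr rfl hterm, Finset.sum_const, prevF_card i (i - 1) (by omega),
    smul_eq_mul]

end Main


section Theorem
variable {X : Type*} [Fintype X] [DecidableEq X]

lemma condEnt_blocks (hX : 2 ≤ Fintype.card X) (k d i : ℕ)
    (hd : 1 ≤ d) (hdk : d ≤ k) (hi : 1 ≤ i)
    (p1 : i - 1 < i) (p2 : ∀ j : Fin (i - 1), j.val < i)
    (f : BlockSpace X k d i → (Fin k → X))
    (g : BlockSpace X k d i → (Fin (i - 1) → Fin k → X))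
    (hf : ∀ ω, f ω = blockFn k d i ω ⟨i - 1, p1⟩)
    (hg : ∀ ω j, g ω j = blockFn k d i ω ⟨j.val, p2 j⟩) :
    condEnt f g
      ≥ (d : ℝ) * Real.logb 2 (Fintype.card X)
          * (1 - ((i : ℝ) - 1) / (Fintype.card X : ℝ) ^ (k - d))
        + ((k : ℝ) - (d : ℝ)) * Real.logb 2 (Fintype.card X) := by
  classical
  have hXpos : 0 < Fintype.card X := by omega
  set L := Real.logb 2 (Fintype.card X) with hL
  have hL0 : 0 ≤ L := Real.logb_nonneg one_lt_two (by exact_mod_cast hXpos)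
  set Np := Fintype.card (Fin (k - d) → X) with hNp
  set Ns := Fintype.card (Fin d → X) with hNs
  have hNp_val : Np = Fintype.card X ^ (k - d) := by
    rw [hNp, Fintype.card_fun, Fintype.card_fin]
  have hNs_val : Ns = Fintype.card X ^ d := by
    rw [hNs, Fintype.card_fun, Fintype.card_fin]
  have hNp_pos : 0 < Np := by rw [hNp_val]; positivity
  have hNs_pos : 0 < Ns := by rw [hNs_val]; positivity
  have hNpR : (0:ℝ) < (Np:ℝ) := by exact_mod_cast hNp_pos
  have hNsR : (0:ℝ) < (Ns:ℝ) := by exact_mod_cast hNs_pos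
  -- fiber of g
  have hgfib : ∀ ω, fibCard g ω
      = Np ^ (i - (prevF i (i-1)).card) * Ns ^ (i - (Mins k d i (i-1) ω).card) := by
    intro ω
    have hiff : ∀ ω' : BlockSpace X k d i, g ω' = g ω
        ↔ ∀ j : Fin i, j.val < i - 1 → blockFn k d i ω' j = blockFn k d i ω j := by
      intro ω'
      constructor
      · intro h j hj
        have h2 := congrFun h (⟨j.val, by omega⟩ : Fin (i - 1))
        rw [hg, hg] at h2
        exact h2
      · intro h
        funext j'
        rw [hg, hg]
        exact h ⟨j'.val, p2 j'⟩ j'.isLt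
    have : (univ.filter fun ω' => g ω' = g ω)
        = univ.filter fun ω' : BlockSpace X k d i =>
            ∀ j : Fin i, j.val < i - 1 → blockFn k d i ω' j = blockFn k d i ω j := by
      apply Finset.filter_congr
      intro ω' _
      exact hiff ω'
    rw [fibCard, this, card_blockfiber k d i hd hdk (i-1) ω]
  -- fiber of (f, g)
  have hpfib : ∀ ω, fibCard (fun ω => (f ω, g ω)) ω
      = Np ^ (i - (prevF i i).card) * Ns ^ (i - (Mins k d i i ω).card) := by
    intro ω
    have hiff : ∀ ω' : BlockSpace X k d i, (f ω', g ω') = (f ω, g ω)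
        ↔ ∀ j : Fin i, j.val < i → blockFn k d i ω' j = blockFn k d i ω j := by
      intro ω'
      constructor
      · intro h j hj
        have h1 : f ω' = f ω := congrArg Prod.fst h
        have h2 : g ω' = g ω := congrArg Prod.snd h
        by_cases hjl : j.val < i - 1
        · have h3 := congrFun h2 (⟨j.val, by omega⟩ : Fin (i - 1))
          rw [hg, hg] at h3
          exact h3
        · have hje : j = ⟨i - 1, p1⟩ := by
            apply Fin.ext
            show j.val = i - 1
            omega
          rw [hje]
          rw [hf, hf] at h1
          exact h1
      · intro h
        have hff : f ω' = f ω := by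
          rw [hf, hf]
          exact h ⟨i - 1, p1⟩ (show i - 1 < i by omega)
        have hgg : g ω' = g ω := by
          funext j'
          rw [hg, hg]
          exact h ⟨j'.val, p2 j'⟩ (p2 j')
        exact Prod.ext hff hgg
    have : (univ.filter fun ω' => (f ω', g ω') = (f ω, g ω))
        = univ.filter fun ω' : BlockSpace X k d i =>
            ∀ j : Fin i, j.val < i → blockFn k d i ω' j = blockFn k d i ω j := by
      apply Finset.filter_congr
      intro ω' _
      exact hiff ω'
    rw [fibCard, this, card_blockfiber k d i hd hdk i ω]
  -- pointwise log identity
  have hpoint : ∀ ω : BlockSpace X k d i,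
      Real.logb 2 (fibCard g ω) - Real.logb 2 (fibCard (fun ω => (f ω, g ω)) ω)
        = Real.logb 2 (Np:ℝ) + (if freshP k d i hi ω then Real.logb 2 (Ns:ℝ) else 0) := by
    intro ω
    have hc : (Mins k d i (i-1) ω).card ≤ i - 1 :=
      le_trans Finset.card_image_le (le_of_eq (prevF_card i (i-1) (by omega)))
    rw [hgfib ω, hpfib ω, Mins_card_eq k d i hi ω, prevF_card i (i-1) (by omega),
      prevF_card i i le_rfl]
    set c := (Mins k d i (i-1) ω).card with hcdef
    by_cases hfr : freshP k d i hi ω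
    · rw [if_pos hfr, if_pos hfr]
      have e1 : i - (i - 1) = 1 := by omega
      have e2 : i - i = 0 := by omega
      have e3 : i - c = (i - (c + 1)) + 1 := by omega
      rw [e1, e2, e3, pow_one, pow_zero, one_mul]
      push_cast
      rw [Real.logb_mul hNpR.ne' (by positivity), pow_succ,
        Real.logb_mul (by positivity) hNsR.ne']
      ring
    · rw [if_neg hfr, if_neg hfr, add_zero]
      have e1 : i - (i - 1) = 1 := by omega
      have e2 : i - i = 0 := by omega
      rw [e1, e2, pow_one, pow_zero, one_mul]
      push_cast
      rw [Real.logb_mul hNpR.ne' (by positivity)]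
      ring
  rw [condEnt_eq]
  rw [Finset.sum_congr rfl (fun ω _ => hpoint ω), Finset.sum_add_distrib,
    Finset.sum_const, Finset.card_univ, Finset.sum_ite, Finset.sum_const,
    Finset.sum_const_zero, add_zero, nsmul_eq_mul, nsmul_eq_mul]
  -- counting
  have hcardΩ : Fintype.card (BlockSpace X k d i) = Np ^ i * Ns ^ i := by
    rw [hNp, hNs]
    rw [show Fintype.card (BlockSpace X k d i)
        = Fintype.card (Fin i → (Fin (k - d) → X)) * Fintype.card (Fin i → (Fin d → X))
      from Fintype.card_prod _ _]
    simp [Fintype.card_fun, Fintype.card_fin]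
  set F := ((univ : Finset (BlockSpace X k d i)).filter (freshP (X := X) k d i hi)).card with hF
  have hnf := notfresh_bound (X := X) k d i hi
  have htot : F + (univ.filter fun ω : BlockSpace X k d i => ¬ freshP k d i hi ω).card
      = Np ^ i * Ns ^ i := by
    rw [hF, Finset.card_filter_add_card_filter_not, Finset.card_univ, hcardΩ]
  have hFbound : (Np:ℝ) ^ i * (Ns:ℝ) ^ i - ((i:ℝ) - 1) * ((Np:ℝ) ^ (i-1) * (Ns:ℝ) ^ i)
      ≤ (F:ℝ) := by
    have h1 := (Nat.cast_le (α := ℝ)).2 hnf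
    push_cast [Nat.cast_sub hi] at h1
    have h2 := congrArg (Nat.cast : ℕ → ℝ) htot
    push_cast at h2
    linarith
  rw [hcardΩ]
  push_cast
  have hn : (0:ℝ) < (Np:ℝ) ^ i * (Ns:ℝ) ^ i := by positivity
  have hsplit : ((Np:ℝ) ^ i * (Ns:ℝ) ^ i)⁻¹
      * ((Np:ℝ) ^ i * (Ns:ℝ) ^ i * Real.logb 2 (Np:ℝ) + (F:ℝ) * Real.logb 2 (Ns:ℝ))
      = Real.logb 2 (Np:ℝ)
        + ((F:ℝ) / ((Np:ℝ) ^ i * (Ns:ℝ) ^ i)) * Real.logb 2 (Ns:ℝ) := by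
    field_simp
  rw [hsplit]
  have hlogNp : Real.logb 2 (Np:ℝ) = ((k:ℝ) - d) * L := by
    rw [hNp_val]
    push_cast
    rw [Real.logb_pow, Nat.cast_sub hdk, hL]
  have hlogNs : Real.logb 2 (Ns:ℝ) = (d:ℝ) * L := by
    rw [hNs_val]
    push_cast
    rw [Real.logb_pow, hL]
  have hNs0 : 0 ≤ Real.logb 2 (Ns:ℝ) := by
    rw [hlogNs]; positivity
  have hratio : 1 - ((i:ℝ) - 1) / (Np:ℝ) ≤ (F:ℝ) / ((Np:ℝ) ^ i * (Ns:ℝ) ^ i) := by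
    rw [le_div_iff₀ hn]
    have hp : (Np:ℝ) ^ i = (Np:ℝ) ^ (i - 1) * (Np:ℝ) := by
      rw [← pow_succ]
      congr 1
      omega
    have hexp : (1 - ((i:ℝ) - 1) / (Np:ℝ)) * ((Np:ℝ) ^ i * (Ns:ℝ) ^ i)
        = (Np:ℝ) ^ i * (Ns:ℝ) ^ i - ((i:ℝ) - 1) * ((Np:ℝ) ^ (i-1) * (Ns:ℝ) ^ i) := by
      rw [sub_mul, one_mul]
      congr 1
      rw [hp]
      field_simp
    rw [hexp]
    exact hFbound
  have hmul := mul_le_mul_of_nonneg_right hratio hNs0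
  rw [ge_iff_le, hlogNp, hlogNs]
  have hNpcast : (Np:ℝ) = (Fintype.card X : ℝ) ^ (k - d) := by
    rw [hNp_val]; push_cast; ring
  rw [← hNpcast]
  nlinarith [hmul]

end Theorem



/-- Under the block-generation process, the conditional entropy of the i-th (last) block
given all previous blocks is at least d·log|X|·(1-(i-1)/|X|^{k-d}) + (k-d)·log|X|. -/
theorem stmt8 {X : Type*} [Fintype X] [DecidableEq X] (hX : 2 ≤ Fintype.card X)
    (k d i : ℕ) (hd : 1 ≤ d) (hdk : d ≤ k) (hi : 1 ≤ i) :
    condEnt (fun ω : BlockSpace X k d i => blockFn k d i ω ⟨i - 1, by omega⟩)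
        (fun ω : BlockSpace X k d i => fun j : Fin (i - 1) =>
          blockFn k d i ω ⟨j.val, by omega⟩)
      ≥ (d : ℝ) * Real.logb 2 (Fintype.card X)
          * (1 - ((i : ℝ) - 1) / (Fintype.card X : ℝ) ^ (k - d))
        + ((k : ℝ) - (d : ℝ)) * Real.logb 2 (Fintype.card X) := by
  exact condEnt_blocks hX k d i hd hdk hi (by omega) (fun j => by omega) _ _
    (fun ω => rfl) (fun ω j => rfl)
end

section
/- Under the block-generation process of the previous statement, for i ≤ |X|^{k-d} the entropy of the first i blocks satisfies H(Z^{ik}) ≥ (1/2)·i·d·log|X| + i·(k-d)·log|X|. -/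
open Finset

lemma ent_ge_sum {α : Type*} [Fintype α] (p c : α → ℝ)
    (hp : ∀ a, 0 ≤ p a)
    (hpc : ∀ a, p a ≤ (2:ℝ) ^ (-(c a))) :
    ent p ≥ ∑ a, p a * c a := by
  unfold ent
  rw [ge_iff_le, ← neg_neg (∑ a, p a * c a), neg_le_neg_iff, ← Finset.sum_neg_distrib]
  apply Finset.sum_le_sum
  intro a _
  rcases eq_or_lt_of_le (hp a) with h0 | h0
  · simp [← h0]
  · have hlog : Real.logb 2 (p a) ≤ -(c a) := by
      calc Real.logb 2 (p a) ≤ Real.logb 2 ((2:ℝ) ^ (-(c a))) :=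
            (Real.logb_le_logb (by norm_num) h0 (Real.rpow_pos_of_pos (by norm_num) _)).2 (hpc a)
        _ = -(c a) := Real.logb_rpow (by norm_num) (by norm_num)
    nlinarith [hp a]


lemma gauss_real (n : ℕ) : ∑ t ∈ Finset.range n, (t:ℝ) = (n:ℝ) * ((n:ℝ)-1) / 2 := by
  induction n with
  | zero => simp
  | succ n ih => rw [Finset.sum_range_succ, ih]; push_cast; ring

lemma bern_sum (n : ℕ) (x : ℝ) (hx0 : 0 ≤ x) (hx1 : x ≤ 1) (h : (n:ℝ) * (1-x) ≤ 1) :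
    (n:ℝ) * (1-x) / 2 ≤ 1 - x ^ n := by
  have hgeom : (1 - x) * (∑ t ∈ Finset.range n, x ^ t) = 1 - x ^ n := by
    have := geom_sum_mul x n
    nlinarith [this]
  have hbern : ∀ t ∈ Finset.range n, (1:ℝ) - (t:ℝ) * (1-x) ≤ x ^ t := by
    intro t _
    have h' := one_add_mul_le_pow (a := x - 1) (by linarith) t
    rw [show (1:ℝ) + (x-1) = x by ring] at h'
    linarith
  have hsum : (n:ℝ) - (1-x) * ((n:ℝ) * ((n:ℝ)-1) / 2) ≤ ∑ t ∈ Finset.range n, x ^ t := by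
    have h1 : ∑ t ∈ Finset.range n, ((1:ℝ) - (t:ℝ) * (1-x)) ≤ ∑ t ∈ Finset.range n, x ^ t :=
      Finset.sum_le_sum hbern
    have h2 : ∑ t ∈ Finset.range n, ((1:ℝ) - (t:ℝ) * (1-x))
        = (n:ℝ) - (1-x) * ((n:ℝ) * ((n:ℝ)-1) / 2) := by
      rw [Finset.sum_sub_distrib]
      simp only [Finset.sum_const, Finset.card_range, nsmul_eq_mul, mul_one]
      rw [← Finset.sum_mul, gauss_real]; ring
    linarith [h1, h2.symm.le]
  have hn1 : (1-x) * ((n:ℝ) * ((n:ℝ)-1) / 2) ≤ (n:ℝ)/2 := by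
    rcases Nat.eq_zero_or_pos n with h0 | h0
    · subst h0; simp
    · have hn : (1:ℝ) ≤ (n:ℝ) := by exact_mod_cast h0
      nlinarith
  have hfin : (n:ℝ)/2 ≤ ∑ t ∈ Finset.range n, x ^ t := by linarith
  calc (n:ℝ) * (1-x) / 2 = (1-x) * ((n:ℝ)/2) := by ring
    _ ≤ (1-x) * (∑ t ∈ Finset.range n, x ^ t) := by
        apply mul_le_mul_of_nonneg_left hfin (by linarith)
    _ = 1 - x ^ n := hgeom

lemma key_real (N n : ℕ) (h1 : 1 ≤ N) (h2 : n ≤ N) :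
    (n:ℝ)/2 * (N:ℝ)^n ≤ (N:ℝ) * ((N:ℝ)^n - ((N:ℝ)-1)^n) := by
  have hN : (1:ℝ) ≤ (N:ℝ) := by exact_mod_cast h1
  have hNpos : (0:ℝ) < N := by linarith
  obtain ⟨x, hxdef⟩ : ∃ x:ℝ, x = ((N:ℝ)-1)/N := ⟨_, rfl⟩
  have hx0 : 0 ≤ x := by rw [hxdef]; apply div_nonneg <;> linarith
  have hx1 : x ≤ 1 := by rw [hxdef, div_le_one hNpos]; linarith
  have h1x : 1 - x = 1/(N:ℝ) := by rw [hxdef]; field_simp; ring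
  have hcond : (n:ℝ) * (1-x) ≤ 1 := by
    rw [h1x, mul_one_div, div_le_one hNpos]
    exact_mod_cast h2
  have hb := bern_sum n x hx0 hx1 hcond
  have hxn : x ^ n = ((N:ℝ)-1)^n / (N:ℝ)^n := by rw [hxdef, div_pow]
  have hNn : (0:ℝ) < (N:ℝ)^n := by positivity
  rw [h1x, hxn] at hb
  have hmul := mul_le_mul_of_nonneg_left hb (le_of_lt hNn)
  have hfs : (N:ℝ)^n * ((n:ℝ) * (1/(N:ℝ)) / 2) = (n:ℝ)/2 * (N:ℝ)^n / N := by
    field_simp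
  have hfs2 : (N:ℝ)^n * (1 - ((N:ℝ)-1)^n/(N:ℝ)^n) = (N:ℝ)^n - ((N:ℝ)-1)^n := by
    field_simp
  rw [hfs, hfs2] at hmul
  calc (n:ℝ)/2 * (N:ℝ)^n = (N:ℝ) * ((n:ℝ)/2 * (N:ℝ)^n / N) := by field_simp
    _ ≤ (N:ℝ) * ((N:ℝ)^n - ((N:ℝ)-1)^n) := by
        apply mul_le_mul_of_nonneg_left hmul (le_of_lt hNpos)

lemma card_avoid {I P : Type*} [Fintype I] [Fintype P] [DecidableEq P] [DecidableEq I] (a : P) :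
    (Finset.univ.filter fun g : I → P => ∀ j, g j ≠ a).card
      = (Fintype.card P - 1) ^ Fintype.card I := by
  rw [← Fintype.card_subtype]
  rw [Fintype.card_congr (Equiv.subtypePiEquivPi (p := fun (_ : I) (x : P) => x ≠ a))]
  rw [Fintype.card_pi]
  simp [Fintype.card_subtype_compl, Fintype.card_subtype_eq]

lemma sum_image_ge {I P : Type*} [Fintype I] [Fintype P] [DecidableEq P] [DecidableEq I]
    (hP : 1 ≤ Fintype.card P) (hI : Fintype.card I ≤ Fintype.card P) :
    ((Fintype.card I : ℝ)/2) * (Fintype.card P : ℝ)^(Fintype.card I)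
      ≤ ∑ g : I → P, ((Finset.univ.image g).card : ℝ) := by
  classical
  set N := Fintype.card P
  set n := Fintype.card I
  have hswap : ∑ g : I → P, ((Finset.univ.image g).card : ℝ)
      = ∑ a : P, ∑ g : I → P, (if a ∈ Finset.univ.image g then (1:ℝ) else 0) := by
    rw [Finset.sum_comm]
    apply Finset.sum_congr rfl
    intro g _
    rw [Finset.sum_ite_mem, Finset.univ_inter, Finset.sum_const, nsmul_eq_mul, mul_one]
  rw [hswap]
  have hinner : ∀ a : P, ∑ g : I → P, (if a ∈ Finset.univ.image g then (1:ℝ) else 0)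
      = ((N:ℝ)^n - ((N:ℝ)-1)^n) := by
    intro a
    rw [Finset.sum_boole]
    have hcompl : (Finset.univ.filter fun g : I → P => ¬ (a ∈ Finset.univ.image g))
        = (Finset.univ.filter fun g : I → P => ∀ j, g j ≠ a) := by
      apply Finset.filter_congr
      intro g _
      simp [Finset.mem_image]
    have hsplit := Finset.card_filter_add_card_filter_not
      (s := (Finset.univ : Finset (I → P))) (p := fun g => a ∈ Finset.univ.image g)
    rw [hcompl, card_avoid] at hsplit
    have hcard : Fintype.card (I → P) = N ^ n := by
      rw [Fintype.card_fun]
    rw [Finset.card_univ, hcard] at hsplit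
    have hNm1 : ((N - 1 : ℕ) : ℝ) = (N:ℝ) - 1 := by
      have : 1 ≤ N := hP
      push_cast [Nat.cast_sub this]
      ring
    have : ((Finset.univ.filter fun g : I → P => a ∈ Finset.univ.image g).card : ℝ)
        = (N:ℝ)^n - ((N:ℝ)-1)^n := by
      have := congrArg (fun t : ℕ => (t:ℝ)) hsplit
      push_cast at this
      rw [hNm1] at this
      linarith
    rw [this]
  have hrw : ∑ a : P, ∑ g : I → P, (if a ∈ Finset.univ.image g then (1:ℝ) else 0)
      = ∑ _a : P, ((N:ℝ)^n - ((N:ℝ)-1)^n) := Finset.sum_congr rfl (fun a _ => hinner a)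
  rw [hrw, Finset.sum_const, Finset.card_univ, nsmul_eq_mul]
  calc ((n:ℝ)/2) * (N:ℝ)^n ≤ (N:ℝ) * ((N:ℝ)^n - ((N:ℝ)-1)^n) := key_real N n hP hI
    _ = _ := rfl




lemma min'_congr {α : Type*} [LinearOrder α] (s t : Finset α) (hs : s.Nonempty) (ht : t.Nonempty)
    (h : s = t) : s.min' hs = t.min' ht := by subst h; rfl

lemma fiber_card_le {X : Type*} [Fintype X] [DecidableEq X] (k d i : ℕ) (hdk : d ≤ k)
    (a : Fin i → Fin k → X) (pa : Fin i → Fin (k - d) → X)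
    (hpa : ∀ (j : Fin i) (t : Fin (k - d)),
      pa j t = a j ⟨t.val, lt_of_lt_of_le t.2 (Nat.sub_le k d)⟩) :
    (Finset.univ.filter fun ω : BlockSpace X k d i =>
        (fun j => blockFn k d i ω j) = a).card
      ≤ Fintype.card X ^ (d * (i - (Finset.univ.image pa).card)) := by
  classical
  set fib := Finset.univ.filter fun ω : BlockSpace X k d i =>
      (fun j => blockFn k d i ω j) = a with hfib
  set S : Finset (Fin i) := Finset.univ.filter
    (fun j => (Finset.univ.filter fun j' => pa j' = pa j).min' ⟨j, by simp⟩ = j) with hS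
  -- Step A : first component determined
  have hpre : ∀ ω ∈ fib, ω.1 = pa := by
    intro ω hω
    rw [hfib, Finset.mem_filter] at hω
    funext j t
    have h := congrFun (congrFun hω.2 j) ⟨t.val, lt_of_lt_of_le t.2 (Nat.sub_le k d)⟩
    simp only [blockFn, dif_pos t.2, Fin.eta] at h
    rw [hpa j t]
    exact h
  -- Step B : card S = number of distinct prefixes
  have hScard : S.card = (Finset.univ.image pa).card := by
    have hinjOn : Set.InjOn pa S := by
      intro j1 h1 j2 h2 hpe
      rw [hS] at h1 h2
      simp only [Finset.coe_filter, Set.mem_setOf_eq] at h1 h2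
      have hsets : (Finset.univ.filter fun j' => pa j' = pa j1)
          = (Finset.univ.filter fun j' => pa j' = pa j2) := by
        apply Finset.filter_congr; intro j' _; rw [hpe]
      rw [← h1.2, ← h2.2]
      exact min'_congr _ _ _ _ hsets
    have himg : S.image pa = Finset.univ.image pa := by
      apply Finset.Subset.antisymm (Finset.image_subset_image (Finset.subset_univ S))
      intro x hx
      rw [Finset.mem_image] at hx ⊢
      obtain ⟨j, -, rfl⟩ := hx
      have hne : (Finset.univ.filter fun j' => pa j' = pa j).Nonempty := ⟨j, by simp⟩
      obtain ⟨j0, hj0def⟩ : ∃ j0, j0 = (Finset.univ.filter fun j' => pa j' = pa j).min' hne :=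
        ⟨_, rfl⟩
      have hj0mem : j0 ∈ Finset.univ.filter fun j' => pa j' = pa j := by
        rw [hj0def]; exact Finset.min'_mem _ hne
      rw [Finset.mem_filter] at hj0mem
      have hpaj0 : pa j0 = pa j := hj0mem.2
      refine ⟨j0, ?_, hpaj0⟩
      rw [hS, Finset.mem_filter]
      refine ⟨Finset.mem_univ _, ?_⟩
      have hsets : (Finset.univ.filter fun j' => pa j' = pa j0)
          = (Finset.univ.filter fun j' => pa j' = pa j) := by
        apply Finset.filter_congr; intro j' _; rw [hpaj0]
      rw [min'_congr _ _ ⟨j0, by simp⟩ hne hsets, ← hj0def]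
    rw [← himg, Finset.card_image_of_injOn hinjOn]
  -- key: suffix values at indices in S are determined by a
  have hsufS : ∀ ω ∈ fib, ∀ j ∈ S, ∀ s : Fin d,
      ω.2 j s = a j ⟨k - d + s.val, by omega⟩ := by
    rintro ⟨ω1, ω2⟩ hω j hj s
    have h1 : ω1 = pa := hpre _ hω
    subst h1
    rw [hfib, Finset.mem_filter] at hω
    have h := congrFun (congrFun hω.2 j) ⟨k - d + s.val, by omega⟩
    rw [hS, Finset.mem_filter] at hj
    simp only [blockFn] at h
    rw [dif_neg (by omega : ¬ (k - d + s.val < k - d))] at h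
    rw [hj.2] at h
    have hidx : k - d + s.val - (k - d) = s.val := by omega
    simp only [hidx, Fin.eta] at h
    exact h
  -- Step C : injection into functions on the complement of S
  have hmaps : ∀ ω ∈ fib, (fun (j : {j // j ∈ Sᶜ}) => ω.2 j.val) ∈
      (Finset.univ : Finset ({j // j ∈ Sᶜ} → Fin d → X)) := fun _ _ => Finset.mem_univ _
  have hinj : Set.InjOn (fun (ω : BlockSpace X k d i) (j : {j // j ∈ Sᶜ}) => ω.2 j.val) fib := by
    rintro ⟨ω1, ω2⟩ hω ⟨ω1', ω2'⟩ hω' heq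
    have h1 : ω1 = pa := hpre _ hω
    have h1' : ω1' = pa := hpre _ hω'
    subst h1; subst h1'
    have h2 : ω2 = ω2' := by
      funext j s
      by_cases hj : j ∈ S
      · exact (hsufS _ hω j hj s).trans (hsufS _ hω' j hj s).symm
      · have hjc : j ∈ Sᶜ := Finset.mem_compl.2 hj
        exact congrFun (congrFun heq ⟨j, hjc⟩) s
    rw [h2]
  have hle := Finset.card_le_card_of_injOn _ hmaps hinj
  rw [Finset.card_univ] at hle
  calc fib.card ≤ Fintype.card ({j // j ∈ Sᶜ} → Fin d → X) := hle
    _ = Fintype.card X ^ (d * (i - (Finset.univ.image pa).card)) := by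
        rw [Fintype.card_fun, Fintype.card_fun, Fintype.card_fin, Fintype.card_coe,
          Finset.card_compl, Fintype.card_fin, hScard, ← pow_mul, mul_comm d]


/-- Under the block-generation process, for i ≤ |X|^{k-d} the entropy of the first i blocks
satisfies H(Z^{ik}) ≥ (1/2)·i·d·log|X| + i·(k-d)·log|X|. -/
theorem stmt9 {X : Type*} [Fintype X] [DecidableEq X] (hX : 2 ≤ Fintype.card X)
    (k d i : ℕ) (hd : 1 ≤ d) (hdk : d ≤ k) (hi : 1 ≤ i)
    (hikd : i ≤ Fintype.card X ^ (k - d)) :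
    entRV (fun ω : BlockSpace X k d i => fun j : Fin i => blockFn k d i ω j)
      ≥ (1 / 2) * (i : ℝ) * (d : ℝ) * Real.logb 2 (Fintype.card X)
        + (i : ℝ) * ((k : ℝ) - (d : ℝ)) * Real.logb 2 (Fintype.card X) := by
  classical
  obtain ⟨pa, hpadef⟩ : ∃ pa : (Fin i → Fin k → X) → Fin i → Fin (k - d) → X,
      pa = fun a j t => a j ⟨t.val, lt_of_lt_of_le t.2 (Nat.sub_le k d)⟩ := ⟨_, rfl⟩
  set F : BlockSpace X k d i → (Fin i → Fin k → X) :=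
    fun ω => fun j : Fin i => blockFn k d i ω j with hF
  set m : (Fin i → Fin k → X) → ℕ := fun a => (Finset.univ.image (pa a)).card with hm
  set E : (Fin i → Fin k → X) → ℕ := fun a => (k - d) * i + d * m a with hE
  set L : ℝ := Real.logb 2 (Fintype.card X) with hL
  have hX1 : (1:ℝ) ≤ (Fintype.card X : ℝ) := by exact_mod_cast le_trans (by norm_num) hX
  have hXpos : (0:ℝ) < (Fintype.card X : ℝ) := by linarith
  have hL0 : 0 ≤ L := Real.logb_nonneg (by norm_num) hX1
  have hm_le : ∀ a, m a ≤ i := by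
    intro a
    calc m a ≤ (Finset.univ : Finset (Fin i)).card := Finset.card_image_le
      _ = i := by simp
  -- cardinality of the sample space
  have hcardΩ : Fintype.card (BlockSpace X k d i)
      = Fintype.card X ^ ((k - d) * i + d * i) := by
    rw [Fintype.card_prod, Fintype.card_fun, Fintype.card_fun, Fintype.card_fun,
      Fintype.card_fun, Fintype.card_fin, Fintype.card_fin, Fintype.card_fin,
      ← pow_mul, ← pow_mul, ← pow_add]
  have hXne : Nonempty X := Fintype.card_pos_iff.mp (by omega)
  have hΩpos : (0:ℝ) < (Fintype.card (BlockSpace X k d i) : ℝ) := by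
    have : 0 < Fintype.card (BlockSpace X k d i) := Fintype.card_pos
    exact_mod_cast this
  -- fiber bound gives the pointwise probability bound
  have hdist_le : ∀ a, dist F a ≤ (2:ℝ) ^ (-(((E a : ℕ) : ℝ) * L)) := by
    intro a
    have hfib := fiber_card_le k d i hdk a (pa a) (by rw [hpadef]; intro j t; rfl)
    have hexp1 : d * (i - m a) + E a = (k - d) * i + d * i := by
      have h1 : d * (i - m a) + d * m a = d * i := by
        rw [← Nat.mul_add, Nat.sub_add_cancel (hm_le a)]
      simp only [hE]; linarith [h1]
    have h2L : (2:ℝ) ^ (-(((E a : ℕ) : ℝ) * L)) = ((Fintype.card X : ℝ) ^ (E a : ℕ))⁻¹ := by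
      rw [show -(((E a : ℕ):ℝ) * L) = L * (-((E a : ℕ):ℝ)) by ring]
      rw [Real.rpow_mul (by norm_num : (0:ℝ) ≤ 2)]
      rw [hL, Real.rpow_logb (by norm_num) (by norm_num) hXpos]
      rw [Real.rpow_neg (le_of_lt hXpos), Real.rpow_natCast]
    rw [h2L]
    have hΩr : (Fintype.card (BlockSpace X k d i) : ℝ)
        = (Fintype.card X : ℝ) ^ ((k - d) * i + d * i) := by
      rw [hcardΩ]; push_cast; ring
    have key : ((Finset.univ.filter fun ω : BlockSpace X k d i => F ω = a).card : ℝ)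
        ≤ (Fintype.card X : ℝ) ^ (d * (i - m a)) := by
      calc ((Finset.univ.filter fun ω : BlockSpace X k d i => F ω = a).card : ℝ)
          ≤ ((Fintype.card X ^ (d * (i - m a)) : ℕ) : ℝ) := by exact_mod_cast hfib
        _ = (Fintype.card X : ℝ) ^ (d * (i - m a)) := by push_cast; ring
    have hpowadd : (Fintype.card X : ℝ) ^ (d * (i - m a)) * (Fintype.card X : ℝ) ^ (E a)
        = (Fintype.card X : ℝ) ^ ((k - d) * i + d * i) := by
      rw [← pow_add, hexp1]
    have hXE : (Fintype.card X : ℝ) ^ (E a) ≠ 0 := by positivity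
    show ((Finset.univ.filter fun ω : BlockSpace X k d i => F ω = a).card : ℝ)
        / (Fintype.card (BlockSpace X k d i) : ℝ) ≤ ((Fintype.card X : ℝ) ^ (E a : ℕ))⁻¹
    rw [div_le_iff₀ hΩpos, hΩr, ← hpowadd]
    calc ((Finset.univ.filter fun ω : BlockSpace X k d i => F ω = a).card : ℝ)
        ≤ (Fintype.card X : ℝ) ^ (d * (i - m a)) := key
      _ = ((Fintype.card X : ℝ) ^ (E a))⁻¹
          * ((Fintype.card X : ℝ) ^ (d * (i - m a)) * (Fintype.card X : ℝ) ^ (E a)) := by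
          field_simp
  -- entropy lower bound via ent_ge_sum
  have hent : entRV F ≥ ∑ a, dist F a * (((E a : ℕ) : ℝ) * L) := by
    apply ent_ge_sum
    · intro a
      apply div_nonneg (by positivity) (le_of_lt hΩpos)
    · exact hdist_le
  -- prefix of a generated block is the drawn prefix
  have hpre : ∀ ω : BlockSpace X k d i, pa (F ω) = ω.1 := by
    intro ω
    rw [hpadef]
    funext j t
    simp only [hF, blockFn, dif_pos t.2, Fin.eta]
  -- rewrite the sum as an average over the sample space
  have hfibsum : ∑ a, ((Finset.univ.filter fun ω => F ω = a).card : ℝ) * ((E a : ℕ) : ℝ)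
      = ∑ ω : BlockSpace X k d i, ((E (F ω) : ℕ) : ℝ) := by
    rw [← Finset.sum_fiberwise Finset.univ F (fun ω => ((E (F ω) : ℕ) : ℝ))]
    apply Finset.sum_congr rfl
    intro a _
    have hc : ∀ ω ∈ Finset.univ.filter (fun ω => F ω = a),
        ((E (F ω) : ℕ) : ℝ) = ((E a : ℕ) : ℝ) := by
      intro ω hω
      rw [Finset.mem_filter] at hω
      rw [hω.2]
    rw [Finset.sum_congr rfl hc, Finset.sum_const, nsmul_eq_mul]
  -- compute the expectation of E ∘ F
  have hEsum : ∑ ω : BlockSpace X k d i, ((E (F ω) : ℕ) : ℝ)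
      ≥ (Fintype.card (BlockSpace X k d i) : ℝ) * (((k - d) * i : ℕ) : ℝ)
        + (d : ℝ) * ((i : ℝ) / 2) * (Fintype.card (BlockSpace X k d i) : ℝ) := by
    have hmF : ∀ ω : BlockSpace X k d i, m (F ω) = (Finset.univ.image ω.1).card := by
      intro ω
      simp only [hm]
      rw [hpre ω]
    have hterm : ∀ ω : BlockSpace X k d i, ((E (F ω) : ℕ) : ℝ)
        = (((k - d) * i : ℕ) : ℝ) + (d : ℝ) * ((Finset.univ.image ω.1).card : ℝ) := by
      intro ω
      simp only [hE]
      rw [hmF ω]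
      push_cast
      ring
    have hsplit : ∑ ω : BlockSpace X k d i, ((E (F ω) : ℕ) : ℝ)
        = (Fintype.card (BlockSpace X k d i) : ℝ) * (((k - d) * i : ℕ) : ℝ)
          + (d : ℝ) * ∑ ω : BlockSpace X k d i, ((Finset.univ.image ω.1).card : ℝ) := by
      rw [Finset.sum_congr rfl (fun ω _ => hterm ω), Finset.sum_add_distrib,
        Finset.sum_const, Finset.card_univ, nsmul_eq_mul, ← Finset.mul_sum]
    have hprod : ∑ ω : BlockSpace X k d i, ((Finset.univ.image ω.1).card : ℝ)
        = (Fintype.card (Fin i → Fin d → X) : ℝ)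
          * ∑ g : Fin i → Fin (k - d) → X, ((Finset.univ.image g).card : ℝ) := by
      rw [Fintype.sum_prod_type]
      rw [Finset.sum_congr rfl (fun x _ => by
        rw [Finset.sum_const, Finset.card_univ, nsmul_eq_mul] :
          ∀ x ∈ Finset.univ, (∑ _y : Fin i → Fin d → X, ((Finset.univ.image x).card : ℝ))
            = (Fintype.card (Fin i → Fin d → X) : ℝ) * ((Finset.univ.image x).card : ℝ))]
      rw [← Finset.mul_sum]
    have hP1 : 1 ≤ Fintype.card (Fin (k - d) → X) := by
      rw [Fintype.card_fun, Fintype.card_fin]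
      exact Nat.one_le_pow _ _ (by omega)
    have hIP : Fintype.card (Fin i) ≤ Fintype.card (Fin (k - d) → X) := by
      rw [Fintype.card_fin, Fintype.card_fun, Fintype.card_fin]
      exact hikd
    have hcnt := sum_image_ge (I := Fin i) (P := Fin (k - d) → X) hP1 hIP
    rw [Fintype.card_fin] at hcnt
    have hBnn : (0:ℝ) ≤ (Fintype.card (Fin i → Fin d → X) : ℝ) := by positivity
    have hΩfact : (Fintype.card (BlockSpace X k d i) : ℝ)
        = ((Fintype.card (Fin (k - d) → X) : ℝ) ^ i)
          * (Fintype.card (Fin i → Fin d → X) : ℝ) := by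
      rw [Fintype.card_prod, Fintype.card_fun (α := Fin i) (β := Fin (k - d) → X),
        Fintype.card_fin]
      push_cast
      ring
    rw [hsplit, hprod, hΩfact]
    have hmul := mul_le_mul_of_nonneg_left hcnt hBnn
    nlinarith [hmul]
  -- final assembly
  have hSform : ∑ a, dist F a * (((E a : ℕ) : ℝ) * L)
      = (∑ ω : BlockSpace X k d i, ((E (F ω) : ℕ) : ℝ)) * L
        / (Fintype.card (BlockSpace X k d i) : ℝ) := by
    rw [← hfibsum]
    have hterm2 : ∀ a : Fin i → Fin k → X, dist F a * (((E a : ℕ) : ℝ) * L)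
        = (((Finset.univ.filter fun ω => F ω = a).card : ℝ) * ((E a : ℕ) : ℝ)) * L
          / (Fintype.card (BlockSpace X k d i) : ℝ) := by
      intro a
      show ((Finset.univ.filter fun ω => F ω = a).card : ℝ)
          / (Fintype.card (BlockSpace X k d i) : ℝ) * (((E a : ℕ) : ℝ) * L) = _
      ring
    rw [Finset.sum_congr rfl (fun a _ => hterm2 a), ← Finset.sum_div, ← Finset.sum_mul]
  have hge : (∑ ω : BlockSpace X k d i, ((E (F ω) : ℕ) : ℝ)) * L
        / (Fintype.card (BlockSpace X k d i) : ℝ)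
      ≥ ((((k - d) * i : ℕ) : ℝ) + (d : ℝ) * ((i : ℝ) / 2)) * L := by
    rw [ge_iff_le, le_div_iff₀ hΩpos]
    have hrearr : ((((k - d) * i : ℕ) : ℝ) + (d : ℝ) * ((i : ℝ) / 2)) * L
          * (Fintype.card (BlockSpace X k d i) : ℝ)
        = ((Fintype.card (BlockSpace X k d i) : ℝ) * (((k - d) * i : ℕ) : ℝ)
            + (d : ℝ) * ((i : ℝ) / 2) * (Fintype.card (BlockSpace X k d i) : ℝ)) * L := by
      ring
    rw [hrearr]
    exact mul_le_mul_of_nonneg_right hEsum hL0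
  calc entRV F ≥ ∑ a, dist F a * (((E a : ℕ) : ℝ) * L) := hent
    _ = (∑ ω : BlockSpace X k d i, ((E (F ω) : ℕ) : ℝ)) * L
        / (Fintype.card (BlockSpace X k d i) : ℝ) := hSform
    _ ≥ ((((k - d) * i : ℕ) : ℝ) + (d : ℝ) * ((i : ℝ) / 2)) * L := hge
    _ = (1 / 2) * (i : ℝ) * (d : ℝ) * L + (i : ℝ) * ((k : ℝ) - (d : ℝ)) * L := by
        push_cast [Nat.cast_sub hdk]
        ring
end
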